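/- arXiv:1807.03663 — 7 statements merged into one kernel-verified Lean document; each statement's English description precedes it below -/
import Mathlib

section
/- Let M, N ∈ M_n(K) be two simultaneously diagonalizable matrices over a field K. There is a finite set B ⊆ K of size at most n(n-1)/2 such that for every t ∉ B, any invertible matrix T for which T⁻¹(M + tN)T is diagonal also satisfies that T⁻¹MT and T⁻¹NT are diagonal. -/
open Matrix

-- STATEMENT 3: if `M, N` are simultaneously diagonalizable, there is a set `B` with
-- `|B| ≤ n(n-1)/2` such that for `t ∉ B`, any invertible `T` diagonalizing `M + t•N`
-- also diagonalizes `M` and `N`.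
theorem simultaneous_diagonalization_bad_set {n : ℕ} {K : Type*} [Field K]
    (M N : Matrix (Fin n) (Fin n) K)
    (hsim : ∃ P : GL (Fin n) K,
        ((↑P⁻¹ : Matrix (Fin n) (Fin n) K) * M * (P : Matrix (Fin n) (Fin n) K)).IsDiag ∧
        ((↑P⁻¹ : Matrix (Fin n) (Fin n) K) * N * (P : Matrix (Fin n) (Fin n) K)).IsDiag) :
    ∃ B : Finset K, B.card ≤ n * (n - 1) / 2 ∧
      ∀ t : K, t ∉ B → ∀ T : GL (Fin n) K,
        ((↑T⁻¹ : Matrix (Fin n) (Fin n) K) * (M + t • N) * (T : Matrix (Fin n) (Fin n) K)).IsDiag →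
        ((↑T⁻¹ : Matrix (Fin n) (Fin n) K) * M * (T : Matrix (Fin n) (Fin n) K)).IsDiag ∧
        ((↑T⁻¹ : Matrix (Fin n) (Fin n) K) * N * (T : Matrix (Fin n) (Fin n) K)).IsDiag := by
  classical
  obtain ⟨P, hDdiag, hEdiag⟩ := hsim
  set p : Matrix (Fin n) (Fin n) K := (P : Matrix (Fin n) (Fin n) K) with hp_def
  set p' : Matrix (Fin n) (Fin n) K := (↑P⁻¹ : Matrix (Fin n) (Fin n) K) with hp'_def
  set d : Fin n → K := fun i => (p' * M * p) i i with hd_def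
  set e : Fin n → K := fun i => (p' * N * p) i i with he_def
  have hpM : p' * M * p = Matrix.diagonal d := hDdiag.diagonal_diag.symm
  have hpN : p' * N * p = Matrix.diagonal e := hEdiag.diagonal_diag.symm
  have hp'p : p' * p = 1 := Units.inv_mul P
  have hpp' : p * p' = 1 := Units.mul_inv P
  have hM : M = p * Matrix.diagonal d * p' := by
    calc M = (p * p') * M * (p * p') := by rw [hpp']; simp
    _ = p * (p' * M * p) * p' := by simp only [Matrix.mul_assoc]
    _ = p * Matrix.diagonal d * p' := by rw [hpM]
  have hN : N = p * Matrix.diagonal e * p' := by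
    calc N = (p * p') * N * (p * p') := by rw [hpp']; simp
    _ = p * (p' * N * p) * p' := by simp only [Matrix.mul_assoc]
    _ = p * Matrix.diagonal e * p' := by rw [hpN]
  set badT : Fin n → Fin n → Finset K :=
    fun i j => if e i ≠ e j then {(d j - d i) / (e i - e j)} else ∅ with hbadT_def
  set B : Finset K :=
    Finset.univ.biUnion (fun j : Fin n => (Finset.Iio j).biUnion (fun i => badT i j)) with hB_def
  refine ⟨B, ?_, ?_⟩
  · calc B.card ≤ ∑ j : Fin n, ((Finset.Iio j).biUnion (fun i => badT i j)).card :=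
        Finset.card_biUnion_le
    _ ≤ ∑ j : Fin n, ∑ i ∈ Finset.Iio j, (badT i j).card :=
        Finset.sum_le_sum fun j _ => Finset.card_biUnion_le
    _ ≤ ∑ j : Fin n, ∑ i ∈ Finset.Iio j, 1 := by
        refine Finset.sum_le_sum fun j _ => Finset.sum_le_sum fun i _ => ?_
        by_cases h : e i = e j <;> simp [hbadT_def, h]
    _ = ∑ j : Fin n, (j : ℕ) := by simp
    _ = n * (n - 1) / 2 := by
        rw [Fin.sum_univ_eq_sum_range (fun i => i), Finset.sum_range_id]
  · intro t ht T hTdiag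
    -- collision lemma
    have hkey : ∀ a b : Fin n, a < b → e a ≠ e b → d a + t * e a = d b + t * e b → False := by
      intro a b hab hne heq
      apply ht
      have hsolve : t = (d b - d a) / (e a - e b) := by
        rw [eq_div_iff (sub_ne_zero.mpr hne)]
        linear_combination heq
      refine Finset.mem_biUnion.mpr ⟨b, Finset.mem_univ b, Finset.mem_biUnion.mpr
        ⟨a, Finset.mem_Iio.mpr hab, ?_⟩⟩
      simp only [hbadT_def, if_pos hne, Finset.mem_singleton]
      exact hsolve
    have hB' : ∀ i j : Fin n, d i + t * e i = d j + t * e j → d i = d j ∧ e i = e j := by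
      intro i j heq
      by_cases hne : e i = e j
      · refine ⟨?_, hne⟩
        have heq' := heq
        rw [hne] at heq'
        exact add_right_cancel heq'
      · exfalso
        rcases (show i ≠ j from fun h => hne (by rw [h])).lt_or_gt with h | h
        · exact hkey i j h hne heq
        · exact hkey j i h (Ne.symm hne) heq.symm
    set tm : Matrix (Fin n) (Fin n) K := (T : Matrix (Fin n) (Fin n) K) with htm_def
    set tm' : Matrix (Fin n) (Fin n) K := (↑T⁻¹ : Matrix (Fin n) (Fin n) K) with htm'_def
    have ht'T : tm' * tm = 1 := Units.inv_mul T
    have hTt' : tm * tm' = 1 := Units.mul_inv T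
    set q : Matrix (Fin n) (Fin n) K := p' * tm with hq_def
    set q' : Matrix (Fin n) (Fin n) K := tm' * p with hq'_def
    have hq'q : q' * q = 1 := by
      rw [hq_def, hq'_def]
      calc tm' * p * (p' * tm) = tm' * (p * p') * tm := by simp only [Matrix.mul_assoc]
      _ = 1 := by rw [hpp', Matrix.mul_one, ht'T]
    have hqq' : q * q' = 1 := by
      rw [hq_def, hq'_def]
      calc p' * tm * (tm' * p) = p' * (tm * tm') * p := by simp only [Matrix.mul_assoc]
      _ = 1 := by rw [hTt', Matrix.mul_one, hp'p]
    set Δ : Matrix (Fin n) (Fin n) K := tm' * (M + t • N) * tm with hΔ_def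
    have hΔdiag : Δ = Matrix.diagonal (fun k => Δ k k) := hTdiag.diagonal_diag.symm
    have hsum : M + t • N = p * Matrix.diagonal (fun i => d i + t * e i) * p' := by
      have hdd : Matrix.diagonal (fun i => d i + t * e i)
          = Matrix.diagonal d + t • Matrix.diagonal e := by
        ext i j
        by_cases h : i = j <;> simp [h, Matrix.diagonal_apply]
      rw [hM, hN, hdd, Matrix.mul_add, Matrix.add_mul, Matrix.mul_smul, Matrix.smul_mul]
    have hΔq : Δ = q' * Matrix.diagonal (fun i => d i + t * e i) * q := by
      rw [hΔ_def, hsum, hq_def, hq'_def]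
      simp only [Matrix.mul_assoc]
    have hcomm : Matrix.diagonal (fun i => d i + t * e i) * q = q * Δ := by
      calc Matrix.diagonal (fun i => d i + t * e i) * q
          = 1 * (Matrix.diagonal (fun i => d i + t * e i) * q) := by rw [Matrix.one_mul]
      _ = (q * q') * (Matrix.diagonal (fun i => d i + t * e i) * q) := by rw [hqq']
      _ = q * (q' * Matrix.diagonal (fun i => d i + t * e i) * q) := by
          simp only [Matrix.mul_assoc]
      _ = q * Δ := by rw [← hΔq]
    have hent : ∀ i k, q i k ≠ 0 → d i + t * e i = Δ k k := by
      intro i k hqik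
      have h3 : (Matrix.diagonal (fun i => d i + t * e i) * q) i k = (q * Δ) i k := by
        rw [hcomm]
      rw [Matrix.diagonal_mul] at h3
      rw [hΔdiag, Matrix.mul_diagonal] at h3
      have := h3.trans (mul_comm _ _)
      exact mul_right_cancel₀ hqik this
    have hcol : ∀ k, ∃ i, q i k ≠ 0 := by
      intro k
      by_contra h
      push_neg at h
      have h1 : (q' * q) k k = 0 := by
        rw [Matrix.mul_apply]
        simp [h]
      rw [hq'q, Matrix.one_apply_eq] at h1
      exact one_ne_zero h1
    choose f hf using hcol
    have hde : ∀ i k, q i k ≠ 0 → d i = d (f k) ∧ e i = e (f k) := by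
      intro i k h
      exact hB' i (f k) ((hent i k h).trans (hent (f k) k (hf k)).symm)
    have main : ∀ x : Fin n → K, (∀ i k, q i k ≠ 0 → x i = x (f k)) →
        q' * Matrix.diagonal x * q = Matrix.diagonal (fun k => x (f k)) := by
      intro x hx
      have h1 : Matrix.diagonal x * q = q * Matrix.diagonal (fun k => x (f k)) := by
        ext i k
        rw [Matrix.diagonal_mul, Matrix.mul_diagonal]
        by_cases h : q i k = 0
        · simp [h]
        · rw [hx i k h, mul_comm]
      rw [Matrix.mul_assoc, h1, ← Matrix.mul_assoc, hq'q, Matrix.one_mul]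
    constructor
    · have hMe : tm' * M * tm = q' * Matrix.diagonal d * q := by
        rw [hM, hq_def, hq'_def]; simp only [Matrix.mul_assoc]
      rw [show ((↑T⁻¹ : Matrix (Fin n) (Fin n) K) * M * (T : Matrix (Fin n) (Fin n) K)) = tm' * M * tm from rfl,
        hMe, main d (fun i k h => (hde i k h).1)]
      exact Matrix.isDiag_diagonal _
    · have hNe : tm' * N * tm = q' * Matrix.diagonal e * q := by
        rw [hN, hq_def, hq'_def]; simp only [Matrix.mul_assoc]
      rw [show ((↑T⁻¹ : Matrix (Fin n) (Fin n) K) * N * (T : Matrix (Fin n) (Fin n) K)) = tm' * N * tm from rfl,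
        hNe, main e (fun i k h => (hde i k h).2)]
      exact Matrix.isDiag_diagonal _
end

section
/- Let K be an infinite field, and let M, N ∈ M_n(K) be simultaneously diagonalizable matrices. If t is drawn uniformly at random from a finite set S ⊆ K, then with probability at least 1 − n(n−1)/(2|S|), every transition matrix diagonalizing M + tN also diagonalizes M and N. -/
open Matrix

open Matrix

private lemma good_t_diag {n : ℕ} {K : Type*} [Field K]
    {M N Pm Pi Tm Ti : Matrix (Fin n) (Fin n) K} {μ ν : Fin n → K} {t : K}
    (hPPi : Pm * Pi = 1) (hPiP : Pi * Pm = 1)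
    (hMd : M = Pm * diagonal μ * Pi) (hNd : N = Pm * diagonal ν * Pi)
    (hgood : ∀ i j, μ i + t * ν i = μ j + t * ν j → μ i = μ j ∧ ν i = ν j)
    (hTTi : Tm * Ti = 1) (hTiT : Ti * Tm = 1)
    (hT : (Ti * (M + t • N) * Tm).IsDiag) :
    (Ti * M * Tm).IsDiag ∧ (Ti * N * Tm).IsDiag := by
  classical
  set lam : Fin n → K := fun k => (Ti * (M + t • N) * Tm) k k with hlam
  have hD : Ti * (M + t • N) * Tm = diagonal lam := hT.diagonal_diag.symm
  set dd : Fin n → K := fun i => μ i + t * ν i with hdd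
  have hAd : M + t • N = Pm * diagonal dd * Pi := by
    have hsplit : diagonal dd = diagonal μ + t • diagonal ν := by
      rw [← Matrix.diagonal_smul, ← Matrix.diagonal_add]
      congr 1
    rw [hMd, hNd, hsplit, Matrix.mul_add, Matrix.add_mul, Matrix.mul_smul, Matrix.smul_mul]
  have h1 : (M + t • N) * Tm = Tm * diagonal lam := by
    have h := congrArg (fun X => Tm * X) hD
    simp only [← Matrix.mul_assoc] at h
    rwa [hTTi, Matrix.one_mul] at h
  rw [hAd] at h1
  have key : diagonal dd * Pi * Tm = Pi * Tm * diagonal lam := by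
    have h := congrArg (fun X => Pi * X) h1
    simp only [← Matrix.mul_assoc] at h
    rwa [hPiP, Matrix.one_mul] at h
  have key' : diagonal dd * (Pi * Tm) = Pi * Tm * diagonal lam := by
    rw [← Matrix.mul_assoc]; exact key
  have hE : ∀ i k, dd i * (Pi * Tm) i k = (Pi * Tm) i k * lam k := by
    intro i k
    have := congrFun (congrFun key' i) k
    simpa [Matrix.diagonal_mul, Matrix.mul_diagonal] using this
  have hWiW : Ti * Pm * (Pi * Tm) = 1 := by
    rw [← Matrix.mul_assoc, Matrix.mul_assoc Ti Pm Pi, hPPi, Matrix.mul_one, hTiT]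
  have hcol : ∀ k, ∃ i, (Pi * Tm) i k ≠ 0 := by
    intro k
    by_contra h
    push_neg at h
    have h1' : (Ti * Pm * (Pi * Tm)) k k = (1 : K) := by rw [hWiW]; simp
    rw [Matrix.mul_apply] at h1'
    simp only [h, mul_zero, Finset.sum_const_zero] at h1'
    exact zero_ne_one h1'
  choose i0 hi0 using hcol
  have claim : ∀ i k, (Pi * Tm) i k ≠ 0 → μ i = μ (i0 k) ∧ ν i = ν (i0 k) := by
    intro i k h
    have e1 : dd i = lam k := by
      have := hE i k
      rw [mul_comm ((Pi * Tm) i k) (lam k)] at this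
      exact mul_right_cancel₀ h this
    have e2 : dd (i0 k) = lam k := by
      have := hE (i0 k) k
      rw [mul_comm ((Pi * Tm) (i0 k) k) (lam k)] at this
      exact mul_right_cancel₀ (hi0 k) this
    exact hgood i (i0 k) (e1.trans e2.symm)
  have main : ∀ (A : Matrix (Fin n) (Fin n) K) (d : Fin n → K),
      A = Pm * diagonal d * Pi → (∀ i k, (Pi * Tm) i k ≠ 0 → d i = d (i0 k)) →
      (Ti * A * Tm).IsDiag := by
    intro A d hAd' hdclaim
    have hdW : diagonal d * (Pi * Tm) = (Pi * Tm) * diagonal (fun k => d (i0 k)) := by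
      ext i k
      rw [Matrix.diagonal_mul, Matrix.mul_diagonal]
      by_cases h : (Pi * Tm) i k = 0
      · simp [h]
      · rw [hdclaim i k h, mul_comm]
    have e : Ti * Pm * (diagonal d * (Pi * Tm))
        = Ti * Pm * ((Pi * Tm) * diagonal (fun k => d (i0 k))) := by rw [hdW]
    simp only [← Matrix.mul_assoc] at e
    rw [Matrix.mul_assoc Ti Pm Pi, hPPi, Matrix.mul_one, hTiT, Matrix.one_mul] at e
    have : Ti * A * Tm = diagonal (fun k => d (i0 k)) := by
      rw [hAd']
      simp only [← Matrix.mul_assoc]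
      exact e
    rw [this]
    exact isDiag_diagonal _
  exact ⟨main M μ hMd fun i k h => (claim i k h).1,
    main N ν hNd fun i k h => (claim i k h).2⟩


-- STATEMENT 4: if `M, N` are simultaneously diagonalizable over an infinite field `K`
-- and `t` is drawn uniformly from a finite set `S ⊆ K`, then with probability at least
-- `1 - n(n-1)/(2|S|)`, every transition matrix diagonalizing `M + t•N` also
-- diagonalizes `M` and `N`.
open scoped Classical in
theorem random_combination_diagonalizes {n : ℕ} {K : Type*} [Field K] [Infinite K]
    (M N : Matrix (Fin n) (Fin n) K)
    (hsim : ∃ P : GL (Fin n) K,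
        ((↑P⁻¹ : Matrix (Fin n) (Fin n) K) * M * (P : Matrix (Fin n) (Fin n) K)).IsDiag ∧
        ((↑P⁻¹ : Matrix (Fin n) (Fin n) K) * N * (P : Matrix (Fin n) (Fin n) K)).IsDiag)
    (S : Finset K) (hS : S.Nonempty) :
    (1 : ℝ) - (n * (n - 1) : ℝ) / (2 * S.card) ≤
      ((S.filter fun t =>
          ∀ T : GL (Fin n) K,
            ((↑T⁻¹ : Matrix (Fin n) (Fin n) K) * (M + t • N) *
                (T : Matrix (Fin n) (Fin n) K)).IsDiag →
            ((↑T⁻¹ : Matrix (Fin n) (Fin n) K) * M * (T : Matrix (Fin n) (Fin n) K)).IsDiag ∧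
            ((↑T⁻¹ : Matrix (Fin n) (Fin n) K) * N *
                (T : Matrix (Fin n) (Fin n) K)).IsDiag).card : ℝ) / (S.card : ℝ) := by
  classical
  obtain ⟨P, hPM, hPN⟩ := hsim
  set Pm : Matrix (Fin n) (Fin n) K := (P : Matrix (Fin n) (Fin n) K) with hPm
  set Pi : Matrix (Fin n) (Fin n) K := (↑P⁻¹ : Matrix (Fin n) (Fin n) K) with hPi
  have hPPi : Pm * Pi = 1 := P.mul_inv
  have hPiP : Pi * Pm = 1 := P.inv_mul
  set μ : Fin n → K := fun i => (Pi * M * Pm) i i with hμ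
  set ν : Fin n → K := fun i => (Pi * N * Pm) i i with hν
  have hdiag : ∀ (A : Matrix (Fin n) (Fin n) K), (Pi * A * Pm).IsDiag →
      A = Pm * diagonal (fun i => (Pi * A * Pm) i i) * Pi := by
    intro A hA
    have h := congrArg (fun X => Pm * X * Pi) hA.diagonal_diag
    simp only [← Matrix.mul_assoc] at h
    rw [hPPi, Matrix.one_mul, Matrix.mul_assoc A Pm Pi, hPPi, Matrix.mul_one] at h
    exact h.symm
  have hMd : M = Pm * diagonal μ * Pi := hdiag M hPM
  have hNd : N = Pm * diagonal ν * Pi := hdiag N hPN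
  -- the bad set
  set J : Finset ((_ : Fin n) × Fin n) := Finset.univ.sigma (fun i => Finset.Ioi i) with hJ
  set B : Finset K := J.biUnion (fun p => S.filter fun t =>
      ¬(μ p.1 = μ p.2 ∧ ν p.1 = ν p.2) ∧ μ p.1 + t * ν p.1 = μ p.2 + t * ν p.2) with hB
  have hBS : B ⊆ S := Finset.biUnion_subset.mpr fun p _ => Finset.filter_subset _ _
  have hBcard : B.card ≤ n.choose 2 := by
    calc B.card ≤ ∑ p ∈ J, (S.filter fun t =>
          ¬(μ p.1 = μ p.2 ∧ ν p.1 = ν p.2) ∧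
            μ p.1 + t * ν p.1 = μ p.2 + t * ν p.2).card := Finset.card_biUnion_le
      _ ≤ ∑ _p ∈ J, 1 := by
          apply Finset.sum_le_sum
          intro p _
          apply Finset.card_le_one.mpr
          intro a ha b hb
          rw [Finset.mem_filter] at ha hb
          obtain ⟨-, hne, hae⟩ := ha
          obtain ⟨-, -, hbe⟩ := hb
          by_cases hνp : ν p.1 = ν p.2
          · exfalso
            rw [hνp] at hae
            exact hne ⟨add_right_cancel hae, hνp⟩
          · have h0 : (a - b) * (ν p.1 - ν p.2) = 0 := by linear_combination hae - hbe
            rcases mul_eq_zero.mp h0 with h | h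
            · exact sub_eq_zero.mp h
            · exact absurd (sub_eq_zero.mp h) hνp
      _ = J.card := by simp
      _ = ∑ i : Fin n, (Finset.Ioi i).card := Finset.card_sigma _ _
      _ = ∑ i : Fin n, (n - 1 - (i : ℕ)) := by simp [Fin.card_Ioi]
      _ = ∑ i ∈ Finset.range n, (n - 1 - i) := Fin.sum_univ_eq_sum_range _ _
      _ = ∑ i ∈ Finset.range n, i := Finset.sum_range_reflect id n
      _ = n.choose 2 := by rw [Finset.sum_range_id, Nat.choose_two_right]
  have hgood : ∀ t ∈ S \ B, ∀ i j, μ i + t * ν i = μ j + t * ν j →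
      μ i = μ j ∧ ν i = ν j := by
    intro t ht i j heq
    rw [Finset.mem_sdiff] at ht
    by_contra hc
    apply ht.2
    rw [hB, Finset.mem_biUnion]
    rcases lt_trichotomy i j with hij | hij | hij
    · exact ⟨⟨i, j⟩, Finset.mem_sigma.mpr ⟨Finset.mem_univ _, Finset.mem_Ioi.mpr hij⟩,
        Finset.mem_filter.mpr ⟨ht.1, hc, heq⟩⟩
    · exact absurd ⟨by rw [hij], by rw [hij]⟩ hc
    · refine ⟨⟨j, i⟩, Finset.mem_sigma.mpr ⟨Finset.mem_univ _, Finset.mem_Ioi.mpr hij⟩,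
        Finset.mem_filter.mpr ⟨ht.1, fun h => hc ⟨h.1.symm, h.2.symm⟩, heq.symm⟩⟩
  have hsub : S \ B ⊆ S.filter fun t =>
      ∀ T : GL (Fin n) K,
        ((↑T⁻¹ : Matrix (Fin n) (Fin n) K) * (M + t • N) *
            (T : Matrix (Fin n) (Fin n) K)).IsDiag →
        ((↑T⁻¹ : Matrix (Fin n) (Fin n) K) * M * (T : Matrix (Fin n) (Fin n) K)).IsDiag ∧
        ((↑T⁻¹ : Matrix (Fin n) (Fin n) K) * N *
            (T : Matrix (Fin n) (Fin n) K)).IsDiag := by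
    intro t ht
    rw [Finset.mem_filter]
    refine ⟨(Finset.mem_sdiff.mp ht).1, fun T hT => ?_⟩
    exact good_t_diag hPPi hPiP hMd hNd (hgood t ht) T.mul_inv T.inv_mul hT
  have hFc := Finset.card_le_card hsub
  rw [Finset.card_sdiff_of_subset hBS] at hFc
  have hs : (0 : ℝ) < S.card := by exact_mod_cast Finset.card_pos.mpr hS
  have hcast : ((S.card - B.card : ℕ) : ℝ) = (S.card : ℝ) - B.card :=
    Nat.cast_sub (Finset.card_le_card hBS)
  have hFcR := (Nat.cast_le (α := ℝ)).mpr hFc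
  rw [hcast] at hFcR
  have hBR : (B.card : ℝ) ≤ (n : ℝ) * ((n : ℝ) - 1) / 2 := by
    calc (B.card : ℝ) ≤ (n.choose 2 : ℝ) := Nat.cast_le.mpr hBcard
      _ = (n : ℝ) * ((n : ℝ) - 1) / 2 := Nat.cast_choose_two (K := ℝ) n
  have heq1 : (1 : ℝ) - (n * (n - 1) : ℝ) / (2 * S.card) =
      ((S.card : ℝ) - (n : ℝ) * ((n : ℝ) - 1) / 2) / S.card := by
    rw [sub_div, div_self hs.ne', div_div]
  rw [heq1, div_le_div_iff_of_pos_right hs]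
  linarith
end

section
/- Let m = x_1^{α_1} ⋯ x_n^{α_n} be a monomial over a field K of characteristic 0 with all α_i ≥ 1. An invertible matrix A ∈ GL_n(K) satisfies m(A·x) = m(x) if and only if A = D·P where P is a permutation matrix associated to a permutation π with α_i = α_{π(i)} for all i, and D = diag(λ_1,...,λ_n) with Π_{i=1}^n λ_i^{α_i} = 1. -/
open MvPolynomial Matrix


private lemma primeX {n : ℕ} {K : Type*} [Field K] (k : Fin n) :
    Prime (X k : MvPolynomial (Fin n) K) := by
  let e : MvPolynomial (Fin n) K ≃ₐ[K] Polynomial (MvPolynomial {b : Fin n // b ≠ k} K) :=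
    (renameEquiv K (Equiv.optionSubtypeNe k).symm).trans (optionEquivLeft K _)
  have he : e (X k) = Polynomial.X := by
    simp [e, renameEquiv_apply, rename_X, Equiv.optionSubtypeNe_symm_self, optionEquivLeft_X_none]
  rw [← MulEquiv.prime_iff e]
  show Prime (e (X k))
  rw [he]
  exact Polynomial.prime_X

private lemma coeff_linear {n : ℕ} {K : Type*} [Field K] (B : Fin n → K) (j : Fin n) :
    coeff (Finsupp.single j 1) (∑ j', B j' • (X j' : MvPolynomial (Fin n) K)) = B j := by
  classical
  rw [coeff_sum]
  simp [coeff_smul, coeff_X', Finsupp.single_left_inj (one_ne_zero (α := ℕ))]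

private lemma prod_X_pow {n : ℕ} {K : Type*} [Field K] (α : Fin n → ℕ) :
    (∏ i, (X i : MvPolynomial (Fin n) K) ^ α i)
      = monomial (Finsupp.equivFunOnFinite.symm α) 1 := by
  rw [monomial_eq, C_1, one_mul, Finsupp.prod_fintype]
  · simp
  · intro i; exact pow_zero _

private lemma prod_form {n : ℕ} {K : Type*} [Field K] (π : Equiv.Perm (Fin n))
    (lam : Fin n → K) (α : Fin n → ℕ) :
    (∏ i, (C (lam i) * X (π i) : MvPolynomial (Fin n) K) ^ α i)
      = monomial (Finsupp.equivFunOnFinite.symm fun j => α (π.symm j)) (∏ i, lam i ^ α i) := by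
  have h1 : (∏ i, (C (lam i) * X (π i) : MvPolynomial (Fin n) K) ^ α i)
      = C (∏ i, lam i ^ α i) * ∏ i, (X (π i) : MvPolynomial (Fin n) K) ^ α i := by
    rw [map_prod, ← Finset.prod_mul_distrib]
    simp [mul_pow, C_pow]
  have h2 : (∏ i, (X (π i) : MvPolynomial (Fin n) K) ^ α i)
      = ∏ j, (X j : MvPolynomial (Fin n) K) ^ α (π.symm j) := by
    rw [← Equiv.prod_comp π.symm fun j => (X (π j) : MvPolynomial (Fin n) K) ^ α j]
    simp
  rw [h1, h2]
  rw [show (∏ j, (X j : MvPolynomial (Fin n) K) ^ α (π.symm j))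
      = monomial (Finsupp.equivFunOnFinite.symm fun j => α (π.symm j)) 1 by
    rw [monomial_eq, C_1, one_mul, Finsupp.prod_fintype]
    · simp
    · intro i; exact pow_zero _]
  rw [C_mul_monomial, mul_one]

private lemma eq_C_mul_X {n : ℕ} {K : Type*} [Field K] {p : MvPolynomial (Fin n) K}
    (hp : p ≠ 0) (hdeg : p.totalDegree ≤ 1) {k : Fin n} (hdvd : X k ∣ p) :
    ∃ c : K, c ≠ 0 ∧ p = C c * X k := by
  classical
  obtain ⟨q, hq⟩ := hdvd
  have hq0 : q = C (constantCoeff q) := by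
    ext d
    rcases eq_or_ne d 0 with rfl | hd
    · simp [constantCoeff_eq, coeff_C]
    · rw [coeff_C, if_neg (by exact fun h => hd h.symm)]
      by_contra hne
      have h1 : coeff (Finsupp.single k 1 + d) p ≠ 0 := by
        rw [hq, coeff_X_mul]; exact hne
      have h2 := le_totalDegree (mem_support_iff.mpr h1)
      rw [Finsupp.sum_add_index (by intros; rfl) (by intros; rfl)] at h2
      rw [Finsupp.sum_single_index rfl] at h2
      have hd1 : 1 ≤ d.sum fun _ e => e := by
        rcases Nat.eq_zero_or_pos (d.sum fun _ e => e) with h0 | h0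
        · exfalso
          apply hd
          ext j
          have := Finset.sum_eq_zero_iff.mp h0
          by_cases hj : j ∈ d.support
          · exact this j hj
          · simpa using hj
        · exact h0
      omega
  refine ⟨constantCoeff q, ?_, ?_⟩
  · intro h0
    apply hp
    rw [hq, hq0, h0, map_zero, mul_zero]
  · conv_lhs => rw [hq, hq0]
    rw [mul_comm]

theorem invariance_group_of_monomial {n : ℕ} {K : Type*} [Field K] [CharZero K]
    (α : Fin n → ℕ) (hα : ∀ i, 1 ≤ α i) (A : GL (Fin n) K) :
    aeval (R := K) (fun i => ∑ j, (A : Matrix (Fin n) (Fin n) K) i j • (X j : MvPolynomial (Fin n) K))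
        (∏ i, X i ^ α i) = ∏ i, (X i : MvPolynomial (Fin n) K) ^ α i ↔
      ∃ (π : Equiv.Perm (Fin n)) (lam : Fin n → K),
        (∀ i, α (π i) = α i) ∧ (∏ i, lam i ^ α i = 1) ∧
        (A : Matrix (Fin n) (Fin n) K) = Matrix.diagonal lam * π.permMatrix K := by
  classical
  set B : Matrix (Fin n) (Fin n) K := (A : Matrix (Fin n) (Fin n) K) with hBdef
  set L : Fin n → MvPolynomial (Fin n) K := fun i => ∑ j, B i j • X j with hLdef
  have hPM : ∀ (π : Equiv.Perm (Fin n)) (lam : Fin n → K) (i j : Fin n),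
      (Matrix.diagonal lam * π.permMatrix K) i j = if π i = j then lam i else 0 := by
    intro π lam i j
    rw [Matrix.diagonal_mul]
    by_cases hij : π i = j
    · simp [Equiv.Perm.permMatrix, PEquiv.toMatrix_apply, Equiv.toPEquiv_apply, hij]
    · simp [Equiv.Perm.permMatrix, PEquiv.toMatrix_apply, Equiv.toPEquiv_apply, hij,
        Ne.symm hij]
  constructor
  · intro h
    have hL : (∏ i, (L i) ^ α i) = ∏ i, (X i : MvPolynomial (Fin n) K) ^ α i := by
      rw [← h, map_prod]
      simp only [map_pow, aeval_X]
    have hR0 : (∏ i, (X i : MvPolynomial (Fin n) K) ^ α i) ≠ 0 := by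
      rw [_root_.prod_X_pow]
      simp [monomial_eq_zero]
    have hdeg : ∀ i, (L i).totalDegree ≤ 1 := by
      intro i
      refine (totalDegree_finset_sum _ _).trans (Finset.sup_le fun j _ => ?_)
      exact (totalDegree_smul_le _ _).trans (by simp)
    have key : ∀ k, ∃ i, ∃ c : K, c ≠ 0 ∧ L i = C c * X k := by
      intro k
      have hdvd : (X k : MvPolynomial (Fin n) K) ∣ ∏ i, (L i) ^ α i := by
        rw [hL]
        exact dvd_trans (dvd_pow_self _ (Nat.one_le_iff_ne_zero.mp (hα k)))
          (Finset.dvd_prod_of_mem _ (Finset.mem_univ k))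
      obtain ⟨i, -, hi⟩ := (primeX k).exists_mem_finset_dvd hdvd
      have hXdvd : (X k : MvPolynomial (Fin n) K) ∣ L i := (primeX k).dvd_of_dvd_pow hi
      have hLine : L i ≠ 0 := by
        intro h0
        apply hR0
        rw [← hL]
        exact Finset.prod_eq_zero (Finset.mem_univ i)
          (by rw [h0, zero_pow (Nat.one_le_iff_ne_zero.mp (hα i))])
      obtain ⟨c, hc0, hc⟩ := eq_C_mul_X hLine (hdeg i) hXdvd
      exact ⟨i, c, hc0, hc⟩
    choose τ c hc0 hLc using key
    have hτinj : Function.Injective τ := by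
      intro k k' hkk
      have h2 : (monomial (Finsupp.single k 1) (c k) : MvPolynomial (Fin n) K)
          = monomial (Finsupp.single k' 1) (c k') := by
        rw [← C_mul_X_eq_monomial, ← C_mul_X_eq_monomial, ← hLc k, hkk, hLc k']
      rcases (monomial_eq_monomial_iff _ _ _ _).mp h2 with ⟨hs, -⟩ | ⟨h0, -⟩
      · exact (Finsupp.single_left_inj one_ne_zero).mp hs
      · exact absurd h0 (hc0 k)
    let σe : Equiv.Perm (Fin n) := Equiv.ofBijective τ (Finite.injective_iff_bijective.mp hτinj)
    have hLi : ∀ i, L i = C (c (σe.symm i)) * X (σe.symm i) := by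
      intro i
      have h3 := hLc (σe.symm i)
      rwa [show τ (σe.symm i) = i from σe.apply_symm_apply i] at h3
    have hmon := hL
    rw [Finset.prod_congr rfl (fun i _ => by rw [hLi i]),
      prod_form σe.symm (fun i => c (σe.symm i)) α, _root_.prod_X_pow] at hmon
    rcases (monomial_eq_monomial_iff _ _ _ _).mp hmon with ⟨hs, hcoef⟩ | ⟨-, h10⟩
    swap
    · exact absurd h10 one_ne_zero
    have hαeq : ∀ j, α (σe.symm.symm j) = α j :=
      fun j => congrFun (Finsupp.equivFunOnFinite.symm.injective hs) j
    refine ⟨σe.symm, fun i => c (σe.symm i), ?_, hcoef, ?_⟩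
    · intro i
      have h4 := hαeq (σe.symm i)
      rw [Equiv.symm_symm, Equiv.apply_symm_apply] at h4
      exact h4.symm
    · ext i j
      have h5 : B i j = coeff (Finsupp.single j 1) (L i) := (coeff_linear (B i) j).symm
      rw [h5, hLi i, C_mul_X_eq_monomial, coeff_monomial, hPM]
      by_cases hij : σe.symm i = j
      · rw [if_pos hij, if_pos (by rw [hij])]
      · rw [if_neg hij, if_neg (fun hh => hij ((Finsupp.single_left_inj one_ne_zero).mp hh))]
  · rintro ⟨π, lam, hperm, hprod, hA⟩
    have hLi : ∀ i, L i = C (lam i) * X (π i) := by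
      intro i
      show (∑ j, B i j • (X j : MvPolynomial (Fin n) K)) = _
      rw [hA]
      simp only [hPM, ite_smul, zero_smul, Finset.sum_ite_eq, Finset.mem_univ, if_true,
        smul_eq_C_mul]
    rw [map_prod]
    simp only [map_pow, aeval_X]
    have h7 : (∏ i, (L i) ^ α i) = ∏ i, (C (lam i) * X (π i) : MvPolynomial (Fin n) K) ^ α i :=
      Finset.prod_congr rfl fun i _ => by rw [hLi i]
    show (∏ i, (L i) ^ α i) = _
    rw [h7, prod_form, _root_.prod_X_pow]
    have h1 : (fun j => α (π.symm j)) = α := by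
      funext j
      have h8 := hperm (π.symm j)
      rw [Equiv.apply_symm_apply] at h8
      exact h8.symm
    rw [h1, hprod]
end

section
/- If an invertible matrix A over a field K of characteristic 0 fixes the monomial m = x_1^{α_1}⋯x_n^{α_n} (with all α_i ≥ 1) under the substitution action, then A sends each variable x_i to a scalar multiple λ_i x_{π(i)} of another variable, where π is a permutation with α_{π(i)} = α_i, i.e., each column of A has exactly one nonzero entry. -/
open MvPolynomial Matrix

-- STATEMENT 7: if an invertible `A` fixes the monomial `m = x_1^{α_1}⋯x_n^{α_n}`
-- (all `α_i ≥ 1`) under substitution, then `A` sends each variable `x_i` to a nonzero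
-- scalar multiple `λ_i x_{π(i)}` of a variable, where `π` is a permutation with
-- `α_{π(i)} = α_i`; i.e. each row (and column) of `A` has exactly one nonzero entry.
theorem monomial_invariance_monomial_matrix {n : ℕ} {K : Type*} [Field K] [CharZero K]
    (α : Fin n → ℕ) (hα : ∀ i, 1 ≤ α i) (A : GL (Fin n) K)
    (hfix : aeval (R := K)
        (fun i => ∑ j, (A : Matrix (Fin n) (Fin n) K) i j • (X j : MvPolynomial (Fin n) K))
        (∏ i, X i ^ α i) = ∏ i, (X i : MvPolynomial (Fin n) K) ^ α i) :
    ∃ (π : Equiv.Perm (Fin n)) (lam : Fin n → K),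
      (∀ i, lam i ≠ 0) ∧ (∀ i, α (π i) = α i) ∧
      ∀ i j, (A : Matrix (Fin n) (Fin n) K) i j = if j = π i then lam i else 0 := by
  classical
  set M : Matrix (Fin n) (Fin n) K := (A : Matrix (Fin n) (Fin n) K) with hM
  have hdet : M.det ≠ 0 := by
    have hu : IsUnit M := ⟨A, rfl⟩
    exact isUnit_iff_ne_zero.mp ((Matrix.isUnit_iff_isUnit_det M).mp hu)
  have heval : ∀ x : Fin n → K,
      (∏ i, (∑ j, M i j * x j) ^ α i) = ∏ i, x i ^ α i := by
    intro x
    have h := congrArg (eval x) hfix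
    simpa [map_prod, map_pow, map_sum, smul_eq_C_mul] using h
  have huniq : ∀ i j k, j ≠ k → M i j ≠ 0 → M i k ≠ 0 → False := by
    intro i j k hjk hj hk
    set s : K := ∑ l ∈ (Finset.univ.erase j).erase k, M i l with hs
    obtain ⟨t, ht0, htu⟩ : ∃ t : K, t ≠ 0 ∧ M i k * t + s ≠ 0 := by
      by_cases h1 : M i k * 1 + s ≠ 0
      · exact ⟨1, one_ne_zero, h1⟩
      · refine ⟨2, two_ne_zero, ?_⟩
        push_neg at h1
        have h2 : M i k * 2 + s = M i k + (M i k * 1 + s) := by ring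
        rw [h2, h1, add_zero]; exact hk
    set u : K := M i k * t + s with hu
    set x : Fin n → K := fun l => if l = j then -u / M i j else if l = k then t else 1 with hx
    have hxne : ∀ l, x l ≠ 0 := by
      intro l; simp only [hx]
      split_ifs with h1 h2
      · exact div_ne_zero (neg_ne_zero.mpr htu) hj
      · exact ht0
      · exact one_ne_zero
    have hsum : (∑ l, M i l * x l) = 0 := by
      have hj' : j ∈ (Finset.univ : Finset (Fin n)) := Finset.mem_univ j
      have hk' : k ∈ Finset.univ.erase j :=
        Finset.mem_erase.mpr ⟨Ne.symm hjk, Finset.mem_univ k⟩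
      rw [← Finset.add_sum_erase _ _ hj', ← Finset.add_sum_erase _ _ hk']
      have h1 : x j = -u / M i j := by simp [hx]
      have h2 : x k = t := by simp [hx, Ne.symm hjk]
      have h3 : ∑ l ∈ (Finset.univ.erase j).erase k, M i l * x l = s := by
        rw [hs]
        refine Finset.sum_congr rfl ?_
        intro l hl
        rcases Finset.mem_erase.mp hl with ⟨hlk, hl2⟩
        rcases Finset.mem_erase.mp hl2 with ⟨hlj, _⟩
        simp [hx, hlj, hlk]
      rw [h1, h2, h3]
      field_simp [hu]
      ring
    have h0 := heval x
    rw [Finset.prod_eq_zero (Finset.mem_univ i)] at h0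
    · exact (Finset.prod_ne_zero_iff.mpr fun l _ => pow_ne_zero _ (hxne l)) h0.symm
    · rw [hsum]
      exact zero_pow (Nat.one_le_iff_ne_zero.mp (hα i))
  have hex : ∀ i, ∃ j, M i j ≠ 0 := by
    intro i
    by_contra h
    push_neg at h
    exact hdet (Matrix.det_eq_zero_of_row_eq_zero i h)
  choose π0 hπ0 using hex
  have hzero : ∀ i j, j ≠ π0 i → M i j = 0 := by
    intro i j hne
    by_contra h
    exact huniq i j (π0 i) hne h (hπ0 i)
  have hinj : Function.Injective π0 := by
    by_contra h
    have hnsurj : ¬ Function.Surjective π0 := fun hs =>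
      h (Finite.injective_iff_surjective.mpr hs)
    rw [Function.Surjective] at hnsurj
    push_neg at hnsurj
    obtain ⟨k, hk⟩ := hnsurj
    apply hdet
    apply Matrix.det_eq_zero_of_column_eq_zero k
    intro i
    exact hzero i k (fun e => hk i (e ▸ rfl))
  have hsurj : Function.Surjective π0 := Finite.injective_iff_surjective.mp hinj
  refine ⟨Equiv.ofBijective π0 hinj.bijective_of_finite, fun i => M i (π0 i), fun i => hπ0 i, ?_, ?_⟩
  · -- α (π0 i0) = α i0
    intro i0
    have key : ∀ t : K, (∏ i, (M i (π0 i)) ^ α i) * t ^ α i0 = t ^ α (π0 i0) := by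
      intro t
      have h := heval (fun l => if l = π0 i0 then t else 1)
      have hrow : ∀ i, (∑ j, M i j * (if j = π0 i0 then t else 1))
          = M i (π0 i) * (if i = i0 then t else 1) := by
        intro i
        rw [Finset.sum_eq_single (π0 i)]
        · congr 1
          by_cases hi : i = i0
          · simp [hi]
          · have : π0 i ≠ π0 i0 := fun e => hi (hinj e)
            simp [this, hi]
        · intro b _ hb
          rw [hzero i b hb, zero_mul]
        · intro hb; exact absurd (Finset.mem_univ _) hb
      rw [Finset.prod_congr rfl (fun i _ => by rw [hrow i])] at h
      have hL : ∏ i, (M i (π0 i) * (if i = i0 then t else 1)) ^ α i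
          = (∏ i, (M i (π0 i)) ^ α i) * t ^ α i0 := by
        rw [Finset.prod_congr rfl (fun i _ => mul_pow _ _ _), Finset.prod_mul_distrib]
        congr 1
        rw [Finset.prod_eq_single i0]
        · simp
        · intro b _ hb; simp [hb]
        · intro hb; exact absurd (Finset.mem_univ _) hb
      have hR : ∏ l, (if l = π0 i0 then t else 1) ^ α l = t ^ α (π0 i0) := by
        rw [Finset.prod_eq_single (π0 i0)]
        · simp
        · intro b _ hb; simp [hb]
        · intro hb; exact absurd (Finset.mem_univ _) hb
      rw [hL, hR] at h
      exact h
    have hC : (∏ i, (M i (π0 i)) ^ α i) = 1 := by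
      have := key 1
      simpa using this
    have h2 : (2 : K) ^ α i0 = (2 : K) ^ α (π0 i0) := by
      have := key 2
      rwa [hC, one_mul] at this
    have h2' : (2 : ℕ) ^ α i0 = 2 ^ α (π0 i0) := by
      have : ((2 ^ α i0 : ℕ) : K) = ((2 ^ α (π0 i0) : ℕ) : K) := by
        push_cast
        exact h2
      exact_mod_cast this
    have := Nat.pow_right_injective (le_refl 2) h2'
    simp only [Equiv.ofBijective_apply]
    omega
  · intro i j
    by_cases hij : j = π0 i
    · simp [Equiv.ofBijective_apply, hij]
    · simp only [Equiv.ofBijective_apply]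
      rw [if_neg hij]
      exact hzero i j hij
end

section
/- Let K be a field of characteristic 0 and m = x_1^{α_1}⋯x_n^{α_n} a monomial with all α_i ≥ 1. The set of matrices A ∈ M_n(K) with Σ_{i,j} a_{ij} x_j ∂m/∂x_i = 0 (the Lie algebra of m) equals the set of diagonal matrices diag(λ_1,...,λ_n) with Σ_{i=1}^n α_i λ_i = 0. In particular it is a linear subspace of dimension n−1. -/
open MvPolynomial Matrix

-- STATEMENT 8: for `m = x_1^{α_1}⋯x_n^{α_n}` with all `α_i ≥ 1`, the Lie algebra of `m`
-- equals the set of diagonal matrices `diag(λ)` with `Σ α_i λ_i = 0`, a linear subspace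
-- of dimension `n - 1`.
theorem lie_algebra_of_monomial {n : ℕ} {K : Type*} [Field K] [CharZero K]
    (α : Fin n → ℕ) (hα : ∀ i, 1 ≤ α i) :
    {A : Matrix (Fin n) (Fin n) K |
        ∑ i, ∑ j, C (A i j) * (X j * pderiv i (∏ k, X k ^ α k)) = 0} =
      {A : Matrix (Fin n) (Fin n) K |
        ∃ lam : Fin n → K, A = Matrix.diagonal lam ∧ ∑ i, (α i : K) * lam i = 0} ∧
    Module.finrank K (Submodule.span K
      {A : Matrix (Fin n) (Fin n) K |
        ∑ i, ∑ j, C (A i j) * (X j * pderiv i (∏ k, X k ^ α k)) = 0}) = n - 1 := by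
  classical
  set d : Fin n →₀ ℕ := Finsupp.equivFunOnFinite.symm α with hd
  have hdk : ∀ k, d k = α k := fun k => rfl
  have hmm : (∏ k, X k ^ α k : MvPolynomial (Fin n) K) = monomial d 1 := by
    rw [← prod_X_pow_eq_monomial]
    refine (Finset.prod_subset (Finset.subset_univ _) ?_).symm
    intro k _ hk
    exfalso
    exact hk (Finsupp.mem_support_iff.2 (by simpa [hdk] using Nat.one_le_iff_ne_zero.1 (hα k)))
  set E : Fin n → Fin n → (Fin n →₀ ℕ) := fun i j => d - Finsupp.single i 1 + Finsupp.single j 1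
    with hE
  have hEval : ∀ i j k, E i j k = α k - (if i = k then 1 else 0) + (if j = k then 1 else 0) := by
    intro i j k
    simp [hE, Finsupp.single_apply, hdk]
  have hterm : ∀ (A : Matrix (Fin n) (Fin n) K) i j,
      C (A i j) * (X j * pderiv i (∏ k, X k ^ α k)) = monomial (E i j) (A i j * α i) := by
    intro A i j
    rw [hmm, pderiv_monomial, one_mul, X, monomial_mul, C_mul_monomial, hdk, one_mul, add_comm]
  have hEii : ∀ i, E i i = d := by
    intro i
    rw [hE]
    exact tsub_add_cancel_of_le (Finsupp.single_le_iff.2 (by rw [hdk]; exact hα i))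
  have hEd : ∀ i j, i ≠ j → E i j ≠ d := by
    intro i j hij h
    have := DFunLike.congr_fun h j
    rw [hEval] at this
    simp [hij, hdk] at this
  have hEinj : ∀ i j i' j', i ≠ j → i' ≠ j' → E i j = E i' j' → i = i' ∧ j = j' := by
    intro i j i' j' hij hij' h
    have hii' : i = i' := by
      by_contra hne
      have h1 := DFunLike.congr_fun h i'
      rw [hEval, hEval, if_neg hne, if_pos rfl, if_neg (Ne.symm hij')] at h1
      have := hα i'
      split_ifs at h1 <;> omega
    subst hii'
    refine ⟨rfl, ?_⟩
    by_contra hne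
    have h1 := DFunLike.congr_fun h j
    rw [hEval, hEval, if_neg hij, if_pos rfl] at h1
    have := hα j
    split_ifs at h1 with h2
    · exact hne h2.symm
    · omega
  -- forward set equality
  have hset : {A : Matrix (Fin n) (Fin n) K |
        ∑ i, ∑ j, C (A i j) * (X j * pderiv i (∏ k, X k ^ α k)) = 0} =
      {A : Matrix (Fin n) (Fin n) K |
        ∃ lam : Fin n → K, A = Matrix.diagonal lam ∧ ∑ i, (α i : K) * lam i = 0} := by
    ext A
    simp only [Set.mem_setOf_eq]
    constructor
    · intro h
      simp only [hterm] at h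
      have hcoeff : ∀ u : Fin n →₀ ℕ,
          (∑ i, ∑ j, if E i j = u then A i j * (α i : K) else 0) = 0 := by
        intro u
        have := congrArg (coeff u) h
        simpa [coeff_sum, coeff_monomial] using this
      have hoff : ∀ i j, i ≠ j → A i j = 0 := by
        intro i0 j0 hij0
        have h0 := hcoeff (E i0 j0)
        rw [Finset.sum_eq_single i0] at h0
        · rw [Finset.sum_eq_single j0] at h0
          · simp only [if_pos rfl] at h0
            have hα0 : (α i0 : K) ≠ 0 := Nat.cast_ne_zero.2 (by have := hα i0; omega)
            exact (mul_eq_zero.1 h0).resolve_right hα0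
          · intro j _ hj
            rw [if_neg]
            intro hEe
            rcases eq_or_ne i0 j with rfl | hne
            · exact hEd i0 j0 hij0 (by rw [← hEe, hEii])
            · exact hj (hEinj _ _ _ _ hne hij0 hEe).2
          · intro h; exact absurd (Finset.mem_univ j0) h
        · intro i _ hi
          apply Finset.sum_eq_zero
          intro j _
          rw [if_neg]
          intro hEe
          rcases eq_or_ne i j with rfl | hne
          · exact hEd i0 j0 hij0 (by rw [← hEe, hEii])
          · exact hi (hEinj _ _ _ _ hne hij0 hEe).1
        · intro h; exact absurd (Finset.mem_univ i0) h
      refine ⟨fun i => A i i, ?_, ?_⟩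
      · ext i j
        rcases eq_or_ne i j with rfl | hne
        · simp
        · simp [Matrix.diagonal_apply_ne _ hne, hoff i j hne]
      · have h0 := hcoeff d
        rw [Finset.sum_congr rfl (fun i _ => Finset.sum_eq_single i
          (fun j _ hj => if_neg (hEd i j (Ne.symm hj)))
          (fun h => absurd (Finset.mem_univ i) h))] at h0
        simp only [hEii, if_pos rfl] at h0
        rw [← h0]
        exact Finset.sum_congr rfl fun i _ => mul_comm _ _
    · rintro ⟨lam, rfl, hsum⟩
      simp only [hterm]
      rw [Finset.sum_congr rfl (fun i _ => Finset.sum_eq_single i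
        (fun j _ hj => by
          rw [Matrix.diagonal_apply_ne _ (Ne.symm hj), zero_mul, map_zero])
        (fun h => absurd (Finset.mem_univ i) h))]
      simp only [Matrix.diagonal_apply_eq, hEii, ← map_sum]
      rw [show (∑ i, lam i * (α i : K)) = 0 by rw [← hsum]; exact Finset.sum_congr rfl fun i _ => mul_comm _ _]
      exact map_zero _
  refine ⟨hset, ?_⟩
  -- dimension
  let D : (Fin n → K) →ₗ[K] Matrix (Fin n) (Fin n) K :=
    { toFun := Matrix.diagonal
      map_add' := fun x y => (diagonal_add x y).symm
      map_smul' := fun c x => diagonal_smul c x }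
  have hDinj : Function.Injective D := fun x y h => Matrix.diagonal_injective h
  let f : (Fin n → K) →ₗ[K] K :=
    { toFun := fun lam => ∑ i, (α i : K) * lam i
      map_add' := by intro x y; simp [mul_add, Finset.sum_add_distrib]
      map_smul' := by intro c x; simp [Finset.mul_sum, mul_left_comm] }
  have hT : {A : Matrix (Fin n) (Fin n) K |
        ∑ i, ∑ j, C (A i j) * (X j * pderiv i (∏ k, X k ^ α k)) = 0} =
      ↑((LinearMap.ker f).map D) := by
    rw [hset]
    ext A
    simp only [Set.mem_setOf_eq, SetLike.mem_coe, Submodule.mem_map, LinearMap.mem_ker]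
    constructor
    · rintro ⟨lam, rfl, h⟩; exact ⟨lam, h, rfl⟩
    · rintro ⟨lam, h, rfl⟩; exact ⟨lam, rfl, h⟩
  rw [hT, Submodule.span_eq]
  rw [(Submodule.equivMapOfInjective D hDinj (LinearMap.ker f)).symm.finrank_eq]
  rcases Nat.eq_zero_or_pos n with rfl | hn
  · have hle := Submodule.finrank_le (LinearMap.ker f)
    rw [Module.finrank_pi, Fintype.card_fin] at hle
    omega
  · have hsurj : Function.Surjective f := by
      intro c
      refine ⟨Pi.single ⟨0, hn⟩ ((α ⟨0, hn⟩ : K)⁻¹ * c), ?_⟩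
      have hα0 : (α (⟨0, hn⟩ : Fin n) : K) ≠ 0 := Nat.cast_ne_zero.2 (by have := hα ⟨0, hn⟩; omega)
      simp only [f, LinearMap.coe_mk, AddHom.coe_mk]
      rw [Finset.sum_eq_single (⟨0, hn⟩ : Fin n)]
      · rw [Pi.single_eq_same, ← mul_assoc, mul_inv_cancel₀ hα0, one_mul]
      · intro i _ hi; rw [Pi.single_eq_of_ne hi, mul_zero]
      · intro h; exact absurd (Finset.mem_univ _) h
    have h1 : Module.finrank K (LinearMap.range f) = 1 := by
      rw [LinearMap.range_eq_top.2 hsurj, finrank_top, Module.finrank_self]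
    have h2 := LinearMap.finrank_range_add_finrank_ker f
    rw [h1, Module.finrank_pi, Fintype.card_fin] at h2
    omega
end

section
/- Let K be a field of characteristic 0 and f ∈ K[x_1,...,x_n] a nonzero homogeneous polynomial of degree d. Then f is a monomial depending on all n variables (with all exponents ≥ 1) if and only if the Lie algebra of f, i.e., {A ∈ M_n(K) : Σ_{i,j} a_{ij} x_j ∂f/∂x_i = 0}, is an (n−1)-dimensional subspace of the space of diagonal matrices. -/
set_option linter.unusedSectionVars false
set_option maxHeartbeats 1600000


open MvPolynomial Matrix

section Aux

variable {n : ℕ} {K : Type*} [Field K] [CharZero K]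

private noncomputable def Phi (f : MvPolynomial (Fin n) K) :
    Matrix (Fin n) (Fin n) K →ₗ[K] MvPolynomial (Fin n) K where
  toFun A := ∑ i, ∑ j, C (A i j) * (X j * pderiv i f)
  map_add' A B := by
    simp [Matrix.add_apply, map_add, add_mul, Finset.sum_add_distrib]
  map_smul' c A := by
    simp [Matrix.smul_apply, smul_eq_mul, _root_.map_mul, Finset.mul_sum, smul_eq_C_mul, mul_assoc]

private lemma Phi_apply (f : MvPolynomial (Fin n) K) (A : Matrix (Fin n) (Fin n) K) :
    Phi f A = ∑ i, ∑ j, C (A i j) * (X j * pderiv i f) := rfl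

private lemma X_mul_pderiv_monomial (i : Fin n) (β : Fin n →₀ ℕ) (c : K) :
    X i * pderiv i (monomial β c) = monomial β ((β i : K) * c) := by
  rw [pderiv_monomial]
  by_cases h : β i = 0
  · simp [h]
  · have hX : (X i : MvPolynomial (Fin n) K) = monomial (Finsupp.single i 1) 1 := rfl
    rw [hX, monomial_mul, one_mul]
    have he : Finsupp.single i 1 + (β - Finsupp.single i 1) = β := by
      ext k
      simp only [Finsupp.add_apply, Finsupp.tsub_apply, Finsupp.single_apply]
      split_ifs with h'
      · subst h'; omega
      · omega
    rw [he, mul_comm]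

private lemma coeff_X_mul_pderiv (f : MvPolynomial (Fin n) K) (i : Fin n) (β : Fin n →₀ ℕ) :
    coeff β (X i * pderiv i f) = (β i : K) * coeff β f := by
  induction f using MvPolynomial.induction_on' with
  | monomial u a =>
    rw [_root_.X_mul_pderiv_monomial]
    simp only [coeff_monomial]
    split_ifs with h
    · subst h; rfl
    · rw [mul_zero]
  | add p q hp hq =>
    rw [map_add, mul_add, coeff_add, hp, hq, coeff_add, mul_add]

private lemma Phi_diagonal (f : MvPolynomial (Fin n) K) (v : Fin n → K) :
    Phi f (diagonal v) = ∑ i, C (v i) * (X i * pderiv i f) := by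
  rw [Phi_apply]
  refine Finset.sum_congr rfl fun i _ => ?_
  rw [Finset.sum_eq_single i]
  · rw [diagonal_apply_eq]
  · intro j _ hj
    rw [diagonal_apply_ne _ (Ne.symm hj), map_zero, zero_mul]
  · intro h; exact absurd (Finset.mem_univ i) h

private lemma coeff_Phi_diagonal (f : MvPolynomial (Fin n) K) (v : Fin n → K) (β : Fin n →₀ ℕ) :
    coeff β (Phi f (diagonal v)) = (∑ i, v i * (β i : K)) * coeff β f := by
  rw [Phi_diagonal, coeff_sum, Finset.sum_mul]
  refine Finset.sum_congr rfl fun i _ => ?_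
  rw [coeff_C_mul, coeff_X_mul_pderiv, mul_assoc]

private lemma Phi_diagonal_eq_zero_iff (f : MvPolynomial (Fin n) K) (v : Fin n → K) :
    Phi f (diagonal v) = 0 ↔ ∀ β ∈ f.support, ∑ i, v i * (β i : K) = 0 := by
  constructor
  · intro h β hβ
    have h2 := congrArg (coeff β) h
    rw [coeff_Phi_diagonal, coeff_zero] at h2
    rcases mul_eq_zero.mp h2 with h3 | h3
    · exact h3
    · exact absurd h3 (mem_support_iff.mp hβ)
  · intro h
    rw [MvPolynomial.ext_iff]
    intro β
    rw [coeff_Phi_diagonal, coeff_zero]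
    by_cases hβ : β ∈ f.support
    · rw [h β hβ, zero_mul]
    · rw [notMem_support_iff.mp hβ, mul_zero]

private noncomputable def gam (β : Fin n →₀ ℕ) (i j : Fin n) : Fin n →₀ ℕ :=
  Finsupp.single j 1 + (β - Finsupp.single i 1)

private lemma gam_apply (β : Fin n →₀ ℕ) (i j k : Fin n) :
    gam β i j k = (if j = k then 1 else 0) + (β k - if i = k then 1 else 0) := by
  simp [gam, Finsupp.single_apply, Finsupp.tsub_apply]

private lemma gam_diag (β : Fin n →₀ ℕ) (hβ : ∀ k, 1 ≤ β k) (i : Fin n) :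
    gam β i i = β := by
  ext k
  rw [gam_apply]
  have := hβ k
  split_ifs with h
  · omega
  · omega

private lemma gam_ne (β : Fin n →₀ ℕ) (hβ : ∀ k, 1 ≤ β k) {i j : Fin n} (hij : i ≠ j) :
    gam β i j ≠ β := by
  intro h
  have h2 := DFunLike.congr_fun h i
  rw [gam_apply, if_neg (Ne.symm hij), if_pos rfl] at h2
  have := hβ i
  omega

private lemma gam_inj (β : Fin n →₀ ℕ) (hβ : ∀ k, 1 ≤ β k) {i j i' j' : Fin n}
    (hij : i ≠ j) (hij' : i' ≠ j') (h : gam β i j = gam β i' j') : i = i' ∧ j = j' := by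
  have H : ∀ k, gam β i j k = gam β i' j' k := fun k => DFunLike.congr_fun h k
  have hii : i = i' := by
    by_contra hne
    have h1 := H i
    have h2 := H i'
    rw [gam_apply, gam_apply] at h1 h2
    rw [if_neg (Ne.symm hij), if_pos rfl, if_neg (fun hh : i' = i => hne hh.symm)] at h1
    rw [if_neg (Ne.symm hij'), if_pos rfl, if_neg hne] at h2
    have b1 := hβ i
    have b2 := hβ i'
    by_cases hii1 : j' = i <;> by_cases hii2 : j = i' <;>
      simp only [hii1, hii2, if_pos, if_neg, if_true, if_false] at h1 h2 <;> omega
  refine ⟨hii, ?_⟩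
  subst hii
  by_contra hne
  have h1 := H j
  rw [gam_apply, gam_apply, if_pos rfl, if_neg (fun hh : j' = j => hne hh.symm)] at h1
  simp only [if_neg hij] at h1
  omega

private lemma Phi_monomial_term (β : Fin n →₀ ℕ) (c : K) (A : Matrix (Fin n) (Fin n) K)
    (i j : Fin n) :
    C (A i j) * (X j * pderiv i (monomial β c)) = monomial (gam β i j) (A i j * (c * β i)) := by
  rw [pderiv_monomial]
  have hX : (X j : MvPolynomial (Fin n) K) = monomial (Finsupp.single j 1) 1 := rfl
  have hC : (C (A i j) : MvPolynomial (Fin n) K) = monomial 0 (A i j) := rfl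
  rw [hX, hC, monomial_mul, monomial_mul, one_mul, zero_add]
  rfl

private lemma Phi_monomial_eq (β : Fin n →₀ ℕ) (c : K) (A : Matrix (Fin n) (Fin n) K) :
    Phi (monomial β c) A =
      ∑ p ∈ Finset.univ ×ˢ Finset.univ,
        monomial (gam β p.1 p.2) (A p.1 p.2 * (c * β p.1)) := by
  rw [Phi_apply, Finset.sum_product'
    (f := fun p1 p2 => (monomial (gam β p1 p2)) (A p1 p2 * (c * (β p1 : ℕ) : K)))]
  exact Finset.sum_congr rfl fun i _ => Finset.sum_congr rfl fun j _ =>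
    Phi_monomial_term β c A i j

private lemma Phi_monomial_zero_iff (β : Fin n →₀ ℕ) (c : K) (hc : c ≠ 0)
    (hβ : ∀ k, 1 ≤ β k) (A : Matrix (Fin n) (Fin n) K) :
    Phi (monomial β c) A = 0 ↔ A.IsDiag ∧ ∑ i, A i i * (β i : K) = 0 := by
  constructor
  · intro h
    have hdiag : A.IsDiag := by
      intro i j hij
      have h2 := congrArg (coeff (gam β i j)) h
      rw [Phi_monomial_eq, coeff_sum, coeff_zero] at h2
      rw [Finset.sum_eq_single (i, j)] at h2
      · rw [coeff_monomial, if_pos rfl] at h2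
        have hb : ((β i : K)) ≠ 0 := Nat.cast_ne_zero.mpr (by have := hβ i; omega)
        rcases mul_eq_zero.mp h2 with h3 | h3
        · exact h3
        · exact absurd h3 (mul_ne_zero hc hb)
      · rintro ⟨i', j'⟩ _ hne
        rw [coeff_monomial, if_neg]
        intro heq
        by_cases hd : i' = j'
        · subst hd
          rw [gam_diag β hβ] at heq
          exact gam_ne β hβ hij heq.symm
        · obtain ⟨h4, h5⟩ := gam_inj β hβ hd hij heq
          exact hne (by rw [Prod.mk.injEq]; exact ⟨h4, h5⟩)
      · intro h4
        exact absurd (Finset.mem_product.mpr ⟨Finset.mem_univ i, Finset.mem_univ j⟩) h4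
    refine ⟨hdiag, ?_⟩
    have h2 := congrArg (coeff β) h
    rw [Phi_monomial_eq, coeff_sum, coeff_zero] at h2
    have hcongr : ∀ p ∈ Finset.univ ×ˢ Finset.univ,
        coeff β (monomial (gam β p.1 p.2) (A p.1 p.2 * (c * (β p.1 : ℕ) : K))) =
          if p.1 = p.2 then A p.1 p.2 * (c * β p.1) else 0 := by
      rintro ⟨i, j⟩ _
      rw [coeff_monomial]
      by_cases hd : i = j
      · subst hd
        rw [if_pos rfl, if_pos (gam_diag β hβ i)]
      · rw [if_neg hd, if_neg (gam_ne β hβ hd)]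
    rw [Finset.sum_congr rfl hcongr,
      Finset.sum_product' (f := fun p1 p2 => if p1 = p2 then A p1 p2 * (c * (β p1 : ℕ) : K) else 0)] at h2
    simp only [Finset.sum_ite_eq, Finset.mem_univ, if_true] at h2
    have h3 : ∑ i, A i i * (c * (β i : K)) = c * ∑ i, A i i * (β i : K) := by
      rw [Finset.mul_sum]
      exact Finset.sum_congr rfl fun i _ => by ring
    rw [h3] at h2
    exact (mul_eq_zero.mp h2).resolve_left hc
  · rintro ⟨hdiag, hsum⟩
    rw [Phi_monomial_eq]
    have hcongr : ∀ p ∈ Finset.univ ×ˢ Finset.univ,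
        monomial (gam β p.1 p.2) (A p.1 p.2 * (c * (β p.1 : ℕ) : K)) =
          if p.1 = p.2 then monomial β (A p.1 p.2 * (c * β p.1)) else 0 := by
      rintro ⟨i, j⟩ _
      by_cases hd : i = j
      · subst hd
        rw [if_pos rfl, gam_diag β hβ]
      · rw [if_neg hd, hdiag hd, zero_mul, map_zero]
    rw [Finset.sum_congr rfl hcongr,
      Finset.sum_product' (f := fun p1 p2 =>
        if p1 = p2 then (monomial β) (A p1 p2 * (c * (β p1 : ℕ) : K)) else 0)]
    simp only [Finset.sum_ite_eq, Finset.mem_univ, if_true]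
    rw [← map_sum]
    have h3 : ∑ i, A i i * (c * (β i : K)) = c * ∑ i, A i i * (β i : K) := by
      rw [Finset.mul_sum]
      exact Finset.sum_congr rfl fun i _ => by ring
    rw [h3, hsum, mul_zero, map_zero]

private noncomputable def diagL : (Fin n → K) →ₗ[K] Matrix (Fin n) (Fin n) K where
  toFun := diagonal
  map_add' a b := (diagonal_add a b).symm
  map_smul' r a := diagonal_smul r a

private lemma diagL_inj : Function.Injective (diagL (n := n) (K := K)) :=
  Matrix.diagonal_injective

private lemma diagL_apply (v : Fin n → K) : diagL v = diagonal v := rfl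

private lemma span_setOf_eq_ker (f : MvPolynomial (Fin n) K) :
    Submodule.span K {A : Matrix (Fin n) (Fin n) K |
        ∑ i, ∑ j, C (A i j) * (X j * pderiv i f) = 0} = LinearMap.ker (Phi f) := by
  have h : {A : Matrix (Fin n) (Fin n) K |
      ∑ i, ∑ j, C (A i j) * (X j * pderiv i f) = 0} = (LinearMap.ker (Phi f) : Set _) := rfl
  rw [h, Submodule.span_eq]

private noncomputable def sumFunc (w : Fin n → K) : (Fin n → K) →ₗ[K] K where
  toFun v := ∑ i, v i * w i
  map_add' a b := by simp [add_mul, Finset.sum_add_distrib]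
  map_smul' r a := by simp [Finset.mul_sum, mul_assoc]

private lemma sumFunc_apply (w v : Fin n → K) : sumFunc w v = ∑ i, v i * w i := rfl

private lemma finrank_ker_sumFunc (w : Fin n → K) (hn : 0 < n) (hw : ∀ i, w i ≠ 0) :
    Module.finrank K (LinearMap.ker (sumFunc w)) = n - 1 := by
  have hsurj : Function.Surjective (sumFunc w) := by
    intro y
    refine ⟨Pi.single ⟨0, hn⟩ (y * (w ⟨0, hn⟩)⁻¹), ?_⟩
    rw [sumFunc_apply, Finset.sum_eq_single (⟨0, hn⟩ : Fin n)]
    · rw [Pi.single_eq_same, mul_assoc, inv_mul_cancel₀ (hw _), mul_one]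
    · intro j _ hj
      rw [Pi.single_eq_of_ne hj, zero_mul]
    · intro h
      exact absurd (Finset.mem_univ _) h
  have h1 := LinearMap.finrank_range_add_finrank_ker (sumFunc w)
  rw [LinearMap.range_eq_top.mpr hsurj, finrank_top, Module.finrank_self,
    Module.finrank_fintype_fun_eq_card, Fintype.card_fin] at h1
  omega

private lemma ker_Phi_monomial (β : Fin n →₀ ℕ) (c : K) (hc : c ≠ 0) (hβ : ∀ k, 1 ≤ β k) :
    LinearMap.ker (Phi (monomial β c)) =
      Submodule.map diagL (LinearMap.ker (sumFunc (fun i => (β i : K)))) := by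
  ext A
  rw [LinearMap.mem_ker, Phi_monomial_zero_iff β c hc hβ, Submodule.mem_map]
  constructor
  · rintro ⟨hdiag, hsum⟩
    refine ⟨A.diag, ?_, ?_⟩
    · rw [LinearMap.mem_ker, sumFunc_apply]
      exact hsum
    · rw [diagL_apply]
      exact hdiag.diagonal_diag
  · rintro ⟨v, hv, rfl⟩
    rw [LinearMap.mem_ker, sumFunc_apply] at hv
    constructor
    · rw [diagL_apply]
      exact isDiag_diagonal v
    · have he : ∀ i, diagL v i i = v i := fun i => diagonal_apply_eq v i
      simp only [he]
      exact hv

private lemma ker_Phi_eq_of_diag (f : MvPolynomial (Fin n) K)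
    (h1 : ∀ A, Phi f A = 0 → A.IsDiag) :
    LinearMap.ker (Phi f) =
      Submodule.map diagL (LinearMap.ker
        (Matrix.mulVecLin (Matrix.of fun (b : {x // x ∈ f.support}) i => ((b.1 i : ℕ) : K)))) := by
  ext A
  rw [LinearMap.mem_ker, Submodule.mem_map]
  constructor
  · intro hA
    have hd := h1 A hA
    refine ⟨A.diag, ?_, ?_⟩
    · rw [LinearMap.mem_ker]
      have h2 : Phi f (diagonal A.diag) = 0 := by
        rw [hd.diagonal_diag]; exact hA
      have h3 := (Phi_diagonal_eq_zero_iff f A.diag).mp h2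
      funext b
      show ∑ i, (b.1 i : K) * A.diag i = 0
      rw [Finset.sum_congr rfl fun i _ => mul_comm ((b.1 i : K)) (A.diag i)]
      exact h3 b.1 b.2
    · rw [diagL_apply]
      exact hd.diagonal_diag
  · rintro ⟨v, hv, rfl⟩
    rw [LinearMap.mem_ker] at hv
    rw [diagL_apply, Phi_diagonal_eq_zero_iff]
    intro β hβ
    have h2 := congrFun hv (⟨β, hβ⟩ : {x // x ∈ f.support})
    have h3 : ∑ i, (β i : K) * v i = 0 := h2
    rw [Finset.sum_congr rfl fun i _ => mul_comm (v i) ((β i : K))]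
    exact h3

end Aux

-- STATEMENT 11: a nonzero homogeneous `f` of degree `d` is a monomial depending on all
-- `n` variables (all exponents ≥ 1) iff its Lie algebra is an `(n-1)`-dimensional
-- subspace of the space of diagonal matrices.
theorem monomial_iff_lie_algebra_diagonal {n d : ℕ} {K : Type*} [Field K] [CharZero K]
    (f : MvPolynomial (Fin n) K) (hf : f ≠ 0) (hhom : f.IsHomogeneous d) :
    (∃ (c : K) (α : Fin n → ℕ), c ≠ 0 ∧ (∀ i, 1 ≤ α i) ∧ f = C c * ∏ i, X i ^ α i) ↔
      ((∀ A ∈ {A : Matrix (Fin n) (Fin n) K |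
            ∑ i, ∑ j, C (A i j) * (X j * pderiv i f) = 0}, A.IsDiag) ∧
        Module.finrank K (Submodule.span K
          {A : Matrix (Fin n) (Fin n) K |
            ∑ i, ∑ j, C (A i j) * (X j * pderiv i f) = 0}) = n - 1) := by
  constructor
  · rintro ⟨c, α, hc, hα, rfl⟩
    set β : Fin n →₀ ℕ := Finsupp.equivFunOnFinite.symm α with hβdef
    have hβ1 : ∀ k, 1 ≤ β k := fun k => hα k
    have hfm : (C c * ∏ i, X i ^ α i : MvPolynomial (Fin n) K) = monomial β c := by
      rw [monomial_eq, Finsupp.prod_pow]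
      rfl
    rw [hfm]
    constructor
    · intro A hA
      have h0 : Phi (monomial β c) A = 0 := hA
      exact ((Phi_monomial_zero_iff β c hc hβ1 A).mp h0).1
    · rw [span_setOf_eq_ker, ker_Phi_monomial β c hc hβ1,
        ← (Submodule.equivMapOfInjective diagL diagL_inj _).finrank_eq]
      rcases Nat.eq_zero_or_pos n with h0 | hpos
      · subst h0
        have hle := Submodule.finrank_le (LinearMap.ker (sumFunc (fun i : Fin 0 => ((β i : ℕ) : K))))
        rw [Module.finrank_fintype_fun_eq_card, Fintype.card_fin] at hle
        omega
      · exact finrank_ker_sumFunc _ hpos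
          (fun i => Nat.cast_ne_zero.mpr (by have := hβ1 i; omega))
  · rintro ⟨h1, h2⟩
    rcases Nat.eq_zero_or_pos n with h0 | hpos
    · subst h0
      obtain ⟨c, rfl⟩ := MvPolynomial.C_surjective (Fin 0) f
      refine ⟨c, 0, fun hc0 => hf (by rw [hc0, map_zero]), fun i => i.elim0, by simp⟩
    -- n ≥ 1
    have hset : ∀ A : Matrix (Fin n) (Fin n) K, Phi f A = 0 → A.IsDiag := fun A hA => h1 A hA
    rw [span_setOf_eq_ker] at h2
    set M : Matrix {x // x ∈ f.support} (Fin n) K :=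
      Matrix.of fun (b : {x // x ∈ f.support}) i => ((b.1 i : ℕ) : K) with hMdef
    have hkerM : Module.finrank K (LinearMap.ker M.mulVecLin) = n - 1 := by
      rw [ker_Phi_eq_of_diag f hset] at h2
      rw [← h2]
      exact (Submodule.equivMapOfInjective diagL diagL_inj _).finrank_eq
    have hsum : ∀ β ∈ f.support, ∑ i, ((β i : ℕ) : K) = (d : K) := by
      intro β hβ
      have hw := hhom (mem_support_iff.mp hβ)
      change Finsupp.weight (fun _ => 1) β = d at hw
      rw [← Finsupp.degree_eq_weight_one] at hw
      have hnat : ∑ i, β i = d := by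
        rw [← hw]
        exact (Finset.sum_subset (Finset.subset_univ β.support)
          (fun i _ hi => Finsupp.notMem_support_iff.mp hi)).symm
      rw [← hnat, Nat.cast_sum]
    obtain ⟨β0, hβ0⟩ := MvPolynomial.support_nonempty.mpr hf
    have huniq : ∀ β ∈ f.support, β = β0 := by
      intro β hβ
      rcases Nat.eq_zero_or_pos d with hd0 | hdpos
      · have hz : ∀ γ ∈ f.support, γ = 0 := by
          intro γ hγ
          have hw := hhom (mem_support_iff.mp hγ)
          change Finsupp.weight (fun _ => 1) γ = d at hw
          rw [← Finsupp.degree_eq_weight_one] at hw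
          exact (Finsupp.degree_eq_zero_iff γ).mp (by omega)
        rw [hz β hβ, hz β0 hβ0]
      · -- rank argument
        have hrank1 : Module.finrank K (Submodule.span K (Set.range M)) = 1 := by
          have h3 := LinearMap.finrank_range_add_finrank_ker M.mulVecLin
          rw [Module.finrank_fintype_fun_eq_card, Fintype.card_fin, hkerM] at h3
          have h4 : M.rank = Module.finrank K (LinearMap.range M.mulVecLin) := rfl
          have h5 : M.rank = 1 := by omega
          have h6 : Mᵀ.rank = 1 := by rw [Matrix.rank_transpose]; exact h5
          have h7 : Mᵀ.rank =
              Module.finrank K (LinearMap.range Mᵀ.mulVecLin) := rfl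
          rw [h7, Matrix.range_mulVecLin] at h6
          exact h6
        have hrows : ∀ γ (hγ : γ ∈ f.support),
            (fun i => ((γ i : ℕ) : K)) ∈ Submodule.span K (Set.range M) :=
          fun γ hγ => Submodule.subset_span ⟨⟨γ, hγ⟩, rfl⟩
        have hv0 : (fun i => ((β0 i : ℕ) : K)) ≠ 0 := by
          intro hz
          have hs0 : ∑ i, ((β0 i : ℕ) : K) = 0 := by
            rw [hz]; simp
          rw [hsum β0 hβ0] at hs0
          exact absurd (Nat.cast_eq_zero.mp hs0) (by omega)
        set U := Submodule.span K (Set.range M) with hUdef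
        have hmem0 : (fun i => ((β0 i : ℕ) : K)) ∈ U := hrows β0 hβ0
        have hmem : (fun i => ((β i : ℕ) : K)) ∈ U := hrows β hβ
        have hne0 : (⟨_, hmem0⟩ : U) ≠ 0 := by
          intro hz
          exact hv0 (congrArg Subtype.val hz)
        have hspan1 := (finrank_eq_one_iff_of_nonzero (⟨_, hmem0⟩ : U) hne0).mp hrank1
        have hmemtop : (⟨_, hmem⟩ : U) ∈ Submodule.span K {(⟨_, hmem0⟩ : U)} := by
          rw [hspan1]; exact Submodule.mem_top
        obtain ⟨t, ht⟩ := Submodule.mem_span_singleton.mp hmemtop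
        have htv : ∀ i, t * ((β0 i : ℕ) : K) = ((β i : ℕ) : K) :=
          fun i => congrFun (congrArg Subtype.val ht) i
        have hs1 : ∑ i, t * ((β0 i : ℕ) : K) = ∑ i, ((β i : ℕ) : K) :=
          Finset.sum_congr rfl fun i _ => htv i
        rw [← Finset.mul_sum, hsum β0 hβ0, hsum β hβ] at hs1
        have hdK : ((d : ℕ) : K) ≠ 0 := Nat.cast_ne_zero.mpr (by omega)
        have ht1 : t = 1 := mul_right_cancel₀ hdK (by rw [hs1, one_mul])
        ext k
        have := htv k
        rw [ht1, one_mul] at this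
        exact (Nat.cast_inj.mp this).symm
    have hsupp : f.support = {β0} := Finset.eq_singleton_iff_unique_mem.mpr ⟨hβ0, huniq⟩
    have hc0 : coeff β0 f ≠ 0 := mem_support_iff.mp hβ0
    have hfm : f = monomial β0 (coeff β0 f) := by
      have h3 := f.as_sum
      rw [hsupp, Finset.sum_singleton] at h3
      exact h3
    have hge : ∀ i, 1 ≤ β0 i := by
      by_contra hcon
      push_neg at hcon
      obtain ⟨i0, hi0⟩ := hcon
      have hi0' : β0 i0 = 0 := by omega
      have hpd : pderiv i0 f = 0 := by
        rw [hfm, pderiv_monomial, hi0']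
        simp
      rcases Nat.lt_or_ge n 2 with hn1 | hn2
      · -- n = 1 : the kernel is everything, contradiction with h2
        have hn1' : n = 1 := by omega
        have hall : ∀ A : Matrix (Fin n) (Fin n) K, Phi f A = 0 := by
          intro A
          rw [Phi_apply]
          refine Finset.sum_eq_zero fun i _ => Finset.sum_eq_zero fun j _ => ?_
          have hii : i = i0 := by
            subst hn1'
            exact Subsingleton.elim i i0
          rw [hii, hpd, mul_zero, mul_zero]
        have hker : LinearMap.ker (Phi f) = ⊤ := by
          rw [LinearMap.ker_eq_top]
          exact LinearMap.ext fun A => hall A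
        rw [hker, finrank_top, Module.finrank_matrix, Module.finrank_self,
          Fintype.card_fin] at h2
        subst hn1'
        omega
      · haveI : Nontrivial (Fin n) := Fin.nontrivial_iff_two_le.mpr hn2
        obtain ⟨j0, hj0⟩ := exists_ne i0
        set A : Matrix (Fin n) (Fin n) K :=
          Matrix.of fun a _ => if a = i0 then (1 : K) else 0 with hAdef
        have hmem : Phi f A = 0 := by
          rw [Phi_apply]
          refine Finset.sum_eq_zero fun i _ => Finset.sum_eq_zero fun j _ => ?_
          by_cases hii : i = i0
          · rw [hii, hpd, mul_zero, mul_zero]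
          · have hz : A i j = 0 := if_neg hii
            rw [hz, map_zero, zero_mul]
        have hdg : A.IsDiag := h1 A hmem
        have hz : A i0 j0 = 0 := hdg (Ne.symm hj0)
        have ho : A i0 j0 = 1 := if_pos rfl
        rw [ho] at hz
        exact one_ne_zero hz
    refine ⟨coeff β0 f, fun i => β0 i, hc0, hge, ?_⟩
    conv_lhs => rw [hfm]
    rw [monomial_eq, Finsupp.prod_pow]
end

section
/- Let K be a field of characteristic 0, m = (x_1⋯x_n)^α, and f ∈ K[x_1,...,x_n] homogeneous of degree nα. Then f is a nonzero constant multiple of m if and only if the Lie algebra g_f of f equals the space of diagonal matrices of trace zero. -/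
open MvPolynomial Matrix

private lemma aux_coeff_X_mul_pderiv {σ : Type*} [DecidableEq σ] {K : Type*} [CommSemiring K]
    (i : σ) (f : MvPolynomial σ K) (a : σ →₀ ℕ) :
    coeff a (X i * pderiv i f) = (a i : K) * coeff a f := by
  have base : ∀ (t : σ →₀ ℕ) (c : K),
      coeff a (X i * pderiv i (monomial t c)) = (a i : K) * coeff a (monomial t c) := by
    intro t c
    rw [pderiv_monomial, ← pow_one (X i), ← monomial_single_add, coeff_monomial, coeff_monomial]
    by_cases ht : t i = 0
    · rcases eq_or_ne t a with rfl | h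
      · simp [ht]
      · simp [h, ht]
    · have key : Finsupp.single i 1 + (t - Finsupp.single i 1) = t := by
        ext k
        simp only [Finsupp.add_apply, Finsupp.tsub_apply, Finsupp.single_apply]
        split_ifs with h
        · subst h; omega
        · omega
      rw [key]
      rcases eq_or_ne t a with rfl | h
      · simp [mul_comm]
      · simp [h]
  conv_lhs => rw [f.as_sum]
  conv_rhs => rw [f.as_sum]
  rw [map_sum, Finset.mul_sum, coeff_sum, coeff_sum, Finset.mul_sum]
  exact Finset.sum_congr rfl fun t _ => base t _

-- STATEMENT 15: for `m = (x_1⋯x_n)^α` and `f` nonzero homogeneous of degree `nα`: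
-- `f` is a nonzero constant multiple of `m` iff the Lie algebra `g_f` equals the space
-- of diagonal matrices of trace zero.
theorem multiple_of_power_of_product_iff_lie_algebra {n α : ℕ} (hα : 1 ≤ α)
    {K : Type*} [Field K] [CharZero K]
    (f : MvPolynomial (Fin n) K) (hf : f ≠ 0) (hhom : f.IsHomogeneous (n * α)) :
    (∃ c : K, c ≠ 0 ∧ f = C c * (∏ k, X k) ^ α) ↔
      {B : Matrix (Fin n) (Fin n) K | ∑ i, ∑ j, C (B i j) * (X j * pderiv i f) = 0} =
        {B : Matrix (Fin n) (Fin n) K | B.IsDiag ∧ Matrix.trace B = 0} := by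
  classical
  set s : Fin n →₀ ℕ := ∑ k : Fin n, Finsupp.single k α with hs_def
  have hs : ∀ k, s k = α := by
    intro k
    rw [hs_def]
    rw [Finset.sum_apply']
    simp [Finsupp.single_apply]
  have hm : (∏ k : Fin n, X k) ^ α = (monomial s (1 : K)) := by
    rw [← Finset.prod_pow]
    simp_rw [X_pow_eq_monomial]
    rw [hs_def, monomial_sum_one]
  set w : Fin n → Fin n → (Fin n →₀ ℕ) :=
    fun i j => Finsupp.single j 1 + (s - Finsupp.single i 1) with hw_def
  have hwapp : ∀ i j k, w i j k = (if j = k then 1 else 0) + (α - if i = k then 1 else 0) := by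
    intro i j k
    simp [hw_def, Finsupp.add_apply, Finsupp.tsub_apply, Finsupp.single_apply, hs k]
  have hww : ∀ i, w i i = s := by
    intro i
    ext k
    rw [hwapp, hs]
    split_ifs <;> omega
  have hwiff : ∀ i j i' j' : Fin n, w i j = w i' j' ↔ ((i = j ∧ i' = j') ∨ (i = i' ∧ j = j')) := by
    intro i j i' j'
    constructor
    · intro h
      have hk : ∀ k, ((if j = k then 1 else 0) + (α - if i = k then 1 else 0) : ℕ)
          = (if j' = k then 1 else 0) + (α - if i' = k then 1 else 0) := by
        intro k
        have hc := DFunLike.congr_fun h k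
        rwa [hwapp, hwapp] at hc
      rcases eq_or_ne i j with hij | hij
      · rcases eq_or_ne i' j' with hij' | hij'
        · exact Or.inl ⟨hij, hij'⟩
        · exfalso
          have h1 := hk j'
          rw [hij, if_pos rfl, if_neg hij'] at h1
          by_cases h2 : j = j'
          · rw [if_pos h2] at h1; omega
          · rw [if_neg h2] at h1; omega
      · rcases eq_or_ne i' j' with hij' | hij'
        · exfalso
          have h1 := hk j
          rw [hij', if_pos rfl, if_neg hij] at h1
          by_cases h2 : j' = j
          · rw [if_pos h2] at h1; omega
          · rw [if_neg h2] at h1; omega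
        · have hj : j' = j := by
            by_contra hjj
            have h1 := hk j
            rw [if_pos rfl, if_neg hij, if_neg hjj] at h1
            by_cases h2 : i' = j
            · rw [if_pos h2] at h1; omega
            · rw [if_neg h2] at h1; omega
          refine Or.inr ⟨?_, hj.symm⟩
          by_contra hii
          have h1 := hk i
          rw [hj, if_pos rfl, if_neg (fun hh : j = i => hij hh.symm),
            if_neg (fun hh : i' = i => hii hh.symm)] at h1
          omega
    · rintro (⟨rfl, rfl⟩ | ⟨rfl, rfl⟩)
      · rw [hww, hww]
      · rfl
  constructor
  · rintro ⟨c, hc, rfl⟩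
    have hcα : (c * (α : K)) ≠ 0 :=
      mul_ne_zero hc (Nat.cast_ne_zero.mpr (by omega))
    have hterm : ∀ B : Matrix (Fin n) (Fin n) K, ∀ i j : Fin n,
        C (B i j) * (X j * pderiv i (C c * (∏ k, X k) ^ α)) =
          monomial (w i j) (B i j * (c * (α : K))) := by
      intro B i j
      rw [hm, C_mul_monomial, mul_one, pderiv_monomial, hs i,
        ← pow_one (X j), ← monomial_single_add, C_mul_monomial]
    ext B
    simp only [Set.mem_setOf_eq]
    constructor
    · intro h
      rw [Finset.sum_congr rfl fun i _ => Finset.sum_congr rfl fun j _ => hterm B i j] at h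
      constructor
      · intro i0 j0 hne
        have hc0 := congrArg (coeff (w i0 j0)) h
        simp only [coeff_sum, coeff_monomial, coeff_zero] at hc0
        rw [Finset.sum_eq_single i0 (fun i _ hi => Finset.sum_eq_zero fun j _ => by
            rw [if_neg]
            rw [hwiff]
            rintro (⟨rfl, rfl⟩ | ⟨rfl, rfl⟩)
            · exact hne rfl
            · exact hi rfl)
          (fun hi => absurd (Finset.mem_univ i0) hi)] at hc0
        rw [Finset.sum_eq_single j0 (fun j _ hj => by
            rw [if_neg]
            rw [hwiff]
            rintro (⟨rfl, rfl⟩ | ⟨-, rfl⟩)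
            · exact hne rfl
            · exact hj rfl)
          (fun hj => absurd (Finset.mem_univ j0) hj)] at hc0
        rw [if_pos rfl] at hc0
        exact (mul_eq_zero.mp hc0).resolve_right hcα
      · have hc0 := congrArg (coeff s) h
        simp only [coeff_sum, coeff_monomial, coeff_zero] at hc0
        have : ∀ i : Fin n, (∑ j, if w i j = s then B i j * (c * (α : K)) else 0) =
            B i i * (c * (α : K)) := by
          intro i
          rw [Finset.sum_eq_single i (fun j _ hj => by
              rw [if_neg]
              rw [← hww i, hwiff]
              rintro (⟨rfl, -⟩ | ⟨-, rfl⟩) <;> exact hj rfl)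
            (fun hi => absurd (Finset.mem_univ i) hi)]
          rw [if_pos (hww i)]
        rw [Finset.sum_congr rfl fun i _ => this i, ← Finset.sum_mul] at hc0
        have htr : (∑ i, B i i) = 0 := (mul_eq_zero.mp hc0).resolve_right hcα
        simpa [Matrix.trace, Matrix.diag] using htr
    · rintro ⟨hdiag, htr⟩
      rw [Finset.sum_congr rfl fun i _ => Finset.sum_congr rfl fun j _ => hterm B i j]
      have : ∀ i : Fin n, (∑ j, monomial (w i j) (B i j * (c * (α : K)))) =
          monomial s (B i i * (c * (α : K))) := by
        intro i
        rw [Finset.sum_eq_single i (fun j _ hj => by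
            rw [hdiag (fun h : i = j => hj h.symm)]
            simp) (fun hi => absurd (Finset.mem_univ i) hi), hww]
      rw [Finset.sum_congr rfl fun i _ => this i, ← map_sum, ← Finset.sum_mul]
      have : (∑ i, B i i) = 0 := by simpa [Matrix.trace, Matrix.diag] using htr
      rw [this, zero_mul, monomial_zero]
  · intro hset
    have hconst : ∀ a ∈ f.support, ∀ k l : Fin n, a k = a l := by
      intro a ha k l
      rcases eq_or_ne k l with rfl | hkl
      · rfl
      set d : Fin n → K := Pi.single k 1 - Pi.single l 1 with hd_def
      have hmem : Matrix.diagonal d ∈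
          {B : Matrix (Fin n) (Fin n) K | B.IsDiag ∧ Matrix.trace B = 0} := by
        refine ⟨Matrix.isDiag_diagonal d, ?_⟩
        simp [Matrix.trace_diagonal, hd_def, Finset.sum_sub_distrib]
      have hmem' : Matrix.diagonal d ∈
          {B : Matrix (Fin n) (Fin n) K | ∑ i, ∑ j, C (B i j) * (X j * pderiv i f) = 0} := by
        rw [hset]; exact hmem
      have heq : ∑ i, ∑ j, C (Matrix.diagonal d i j) * (X j * pderiv i f) = 0 := hmem'
      rw [Finset.sum_congr rfl fun i _ => Finset.sum_eq_single i
        (fun j _ hj => by rw [Matrix.diagonal_apply_ne d (fun h : i = j => hj h.symm)]; simp)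
        (fun hi => absurd (Finset.mem_univ i) hi)] at heq
      have hco := congrArg (coeff a) heq
      simp only [coeff_sum, coeff_C_mul, coeff_zero, Matrix.diagonal_apply_eq,
        aux_coeff_X_mul_pderiv] at hco
      have hsum : (∑ i, d i * ((a i : K) * coeff a f)) = ((a k : K) - (a l : K)) * coeff a f := by
        have hterm2 : ∀ i, d i * ((a i : K) * coeff a f) =
            (if i = k then (a i : K) * coeff a f else 0)
              - (if i = l then (a i : K) * coeff a f else 0) := by
          intro i
          simp only [hd_def, Pi.sub_apply, Pi.single_apply, sub_mul]
          split_ifs <;> ring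
        rw [Finset.sum_congr rfl fun i _ => hterm2 i, Finset.sum_sub_distrib,
          Finset.sum_ite_eq' Finset.univ k fun i => (a i : K) * coeff a f,
          Finset.sum_ite_eq' Finset.univ l fun i => (a i : K) * coeff a f]
        simp [sub_mul]
      rw [hsum] at hco
      have hcoeff : coeff a f ≠ 0 := mem_support_iff.mp ha
      have hkk : (a k : K) = (a l : K) :=
        sub_eq_zero.mp ((mul_eq_zero.mp hco).resolve_right hcoeff)
      exact_mod_cast hkk
    have hsupp : ∀ a ∈ f.support, a = s := by
      intro a ha
      ext k
      have hn : 0 < n := k.pos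
      have hdeg : a.degree = n * α := by
        rw [Finsupp.degree_eq_weight_one]
        exact hhom (mem_support_iff.mp ha)
      have hsum : ∑ l : Fin n, a l = n * α := by
        rw [← hdeg]
        exact (Finset.sum_subset (Finset.subset_univ a.support)
          (fun x _ hx => Finsupp.notMem_support_iff.mp hx)).symm
      have : ∑ l : Fin n, a l = n * a k := by
        rw [Finset.sum_congr rfl fun l _ => hconst a ha l k]
        simp [Finset.sum_const, Finset.card_univ, mul_comm]
      rw [this] at hsum
      have : a k = α := by
        have := Nat.eq_of_mul_eq_mul_left hn hsum
        omega
      rw [this, hs]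
    obtain ⟨a, ha⟩ := MvPolynomial.support_nonempty.mpr hf
    have has : a = s := hsupp a ha
    refine ⟨coeff s f, ?_, ?_⟩
    · rw [← has]; exact mem_support_iff.mp ha
    · conv_rhs => rw [hm, C_mul_monomial, mul_one]
      ext u
      rw [coeff_monomial]
      rcases eq_or_ne s u with rfl | h
      · rw [if_pos rfl]
      · by_contra hne0
        rw [if_neg h] at hne0
        exact h (hsupp u (mem_support_iff.mpr hne0)).symm
end
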